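/- A swap of b_{k-1} and b_k in the LLL algorithm, performed when the Lovász condition fails (i.e. when (b_k^* + μ_{k,k-1} b_{k-1}^*, b_k^* + μ_{k,k-1} b_{k-1}^*) < (3/4)(b_{k-1}^*, b_{k-1}^*)), strictly decreases d_{k-1} = ∏_{j≤k-1}(b_j^*,b_j^*) by a factor less than 3/4, and leaves d_i unchanged for i ≠ k-1. -/

import Mathlib

open Submodule Finset InnerProductSpace

section Aux

variable {E : Type*} [NormedAddCommGroup E] [InnerProductSpace ℝ E]

local notation "⟪" x ", " y "⟫" => @inner ℝ _ _ x y

private lemma inner_span_zero' {v : E} {s : Set E} (h : ∀ x ∈ s, ⟪v, x⟫ = 0) :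
    ∀ x ∈ span ℝ s, ⟪v, x⟫ = 0 := by
  have hle : span ℝ s ≤ (ℝ ∙ v)ᗮ :=
    span_le.mpr fun x hx => Submodule.mem_orthogonal_singleton_iff_inner_right.mpr (h x hx)
  exact fun x hx => Submodule.mem_orthogonal_singleton_iff_inner_right.mp (hle hx)

private lemma inner_gramSchmidt_span' {f : ℕ → E} {n : ℕ} :
    ∀ x ∈ span ℝ (f '' Set.Iio n), ⟪gramSchmidt ℝ f n, x⟫ = 0 := by
  rw [← span_gramSchmidt_Iio ℝ f n]
  refine inner_span_zero' ?_
  rintro _ ⟨i, hi, rfl⟩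
  exact gramSchmidt_orthogonal ℝ f hi.ne'

private lemma gramSchmidt_sub_mem' (f : ℕ → E) (n : ℕ) :
    gramSchmidt ℝ f n - f n ∈ span ℝ (f '' Set.Iio n) := by
  rw [gramSchmidt_def ℝ f n, sub_sub_cancel_left]
  refine neg_mem (Submodule.sum_mem _ fun i hi => ?_)
  have hgi : gramSchmidt ℝ f i ∈ span ℝ (f '' Set.Iio n) := by
    refine span_mono (Set.image_mono ?_) (gramSchmidt_mem_span ℝ f le_rfl)
    intro x hx
    exact lt_of_le_of_lt hx (Finset.mem_Iio.mp hi)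
  have hmem := starProjection_apply_mem (ℝ ∙ gramSchmidt ℝ f i) (f n)
  rw [Submodule.mem_span_singleton] at hmem
  obtain ⟨c, hc⟩ := hmem
  rw [← hc]
  exact smul_mem _ _ hgi

private lemma gs_unique {f : ℕ → E} {n : ℕ} {v : E}
    (h1 : v - f n ∈ span ℝ (f '' Set.Iio n))
    (h2 : ∀ x ∈ span ℝ (f '' Set.Iio n), ⟪v, x⟫ = 0) :
    gramSchmidt ℝ f n = v := by
  have hmem : gramSchmidt ℝ f n - v ∈ span ℝ (f '' Set.Iio n) := by
    have := sub_mem (gramSchmidt_sub_mem' f n) h1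
    rwa [sub_sub_sub_cancel_right] at this
  have hz : ⟪gramSchmidt ℝ f n - v, gramSchmidt ℝ f n - v⟫ = 0 := by
    rw [inner_sub_left, inner_gramSchmidt_span' _ hmem, h2 _ hmem, sub_zero]
  exact sub_eq_zero.mp (inner_self_eq_zero.mp hz)

private lemma gs_congr {f f' : ℕ → E} {n : ℕ} (hn : f' n = f n)
    (hs : span ℝ (f' '' Set.Iio n) = span ℝ (f '' Set.Iio n)) :
    gramSchmidt ℝ f' n = gramSchmidt ℝ f n := by
  refine gs_unique ?_ ?_
  · rw [hn, hs]; exact gramSchmidt_sub_mem' f n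
  · rw [hs]; exact inner_gramSchmidt_span'

end Aux

theorem stmt_15 {E : Type*} [NormedAddCommGroup E] [InnerProductSpace ℝ E]
    (nvec K : ℕ) (b : ℕ → E)
    (hli : LinearIndependent ℝ (fun i : Fin nvec => b i)) (hK : K + 1 < nvec)
    (μ : ℝ)
    (hμ : μ = (inner ℝ (b (K + 1)) (InnerProductSpace.gramSchmidt ℝ b K) : ℝ) /
      (inner ℝ (InnerProductSpace.gramSchmidt ℝ b K) (InnerProductSpace.gramSchmidt ℝ b K) : ℝ))
    (hlovaszfail : ‖InnerProductSpace.gramSchmidt ℝ b (K + 1) + μ • InnerProductSpace.gramSchmidt ℝ b K‖ ^ 2 <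
      (3 / 4) * ‖InnerProductSpace.gramSchmidt ℝ b K‖ ^ 2)
    (b' : ℕ → E) (hb' : b' = b ∘ Equiv.swap K (K + 1))
    (d d' : ℕ → ℝ)
    (hd : ∀ t, d t = ∏ s ∈ Finset.range t,
      (inner ℝ (InnerProductSpace.gramSchmidt ℝ b s) (InnerProductSpace.gramSchmidt ℝ b s) : ℝ))
    (hd' : ∀ t, d' t = ∏ s ∈ Finset.range t,
      (inner ℝ (InnerProductSpace.gramSchmidt ℝ b' s) (InnerProductSpace.gramSchmidt ℝ b' s) : ℝ)) :
    d' (K + 1) < (3 / 4) * d (K + 1) ∧ ∀ t, t ≠ K + 1 → d' t = d t := by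
  -- basic facts about b'
  have hbK : b' K = b (K + 1) := by rw [hb']; simp
  have hbK1 : b' (K + 1) = b K := by rw [hb']; simp
  have hbne : ∀ m, m ≠ K → m ≠ K + 1 → b' m = b m := by
    intro m h1 h2
    rw [hb', Function.comp_apply, Equiv.swap_apply_of_ne_of_ne h1 h2]
  have himg_lt : ∀ s, s ≤ K → b' '' Set.Iio s = b '' Set.Iio s := by
    intro s hs
    refine Set.image_congr fun x hx => ?_
    have hxs : x < s := hx
    exact hbne x (by omega) (by omega)
  have hspan_lt : ∀ s, s ≤ K → span ℝ (b' '' Set.Iio s) = span ℝ (b '' Set.Iio s) :=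
    fun s hs => by rw [himg_lt s hs]
  have h_lt : ∀ s, s < K → gramSchmidt ℝ b' s = gramSchmidt ℝ b s := fun s hs =>
    gs_congr (hbne s (by omega) (by omega)) (hspan_lt s hs.le)
  have himg_ge : ∀ s, K + 1 < s → b' '' Set.Iio s = b '' Set.Iio s := by
    intro s hs
    have hsw : ∀ y, y < s → Equiv.swap K (K + 1) y < s := by
      intro y hy
      rcases eq_or_ne y K with rfl | h1
      · rw [Equiv.swap_apply_left]; omega
      rcases eq_or_ne y (K + 1) with rfl | h2
      · rw [Equiv.swap_apply_right]; omega
      · rw [Equiv.swap_apply_of_ne_of_ne h1 h2]; exact hy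
    ext x
    simp only [Set.mem_image, Set.mem_Iio, hb', Function.comp_apply]
    constructor
    · rintro ⟨y, hy, rfl⟩
      exact ⟨Equiv.swap K (K + 1) y, hsw y hy, rfl⟩
    · rintro ⟨y, hy, rfl⟩
      refine ⟨Equiv.swap K (K + 1) y, hsw y hy, ?_⟩
      rw [Equiv.swap_apply_self]
  have h_ge : ∀ s, K + 1 < s → gramSchmidt ℝ b' s = gramSchmidt ℝ b s := fun s hs =>
    gs_congr (hbne s (by omega) (by omega)) (by rw [himg_ge s hs])
  -- nonvanishing of Gram-Schmidt vectors
  have hne : ∀ n, n < nvec → gramSchmidt ℝ b n ≠ 0 := by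
    intro n hn
    apply gramSchmidt_ne_zero_coe
    have heq : (b ∘ ((↑) : Set.Iic n → ℕ)) =
        (fun i : Fin nvec => b i) ∘
          (fun i : Set.Iic n => (⟨(i : ℕ), lt_of_le_of_lt i.2 hn⟩ : Fin nvec)) := rfl
    rw [heq]
    refine hli.comp _ fun x y hxy => ?_
    exact Subtype.ext (by simpa using congrArg Fin.val hxy)
  have hpos : ∀ x : E, x ≠ 0 → (0 : ℝ) < inner ℝ x x := fun x hx => by
    rw [real_inner_self_eq_norm_sq]
    have : 0 < ‖x‖ := norm_pos_iff.mpr hx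
    positivity
  have hApos : (0 : ℝ) < inner ℝ (gramSchmidt ℝ b K) (gramSchmidt ℝ b K) :=
    hpos _ (hne K (by omega))
  have hBpos : (0 : ℝ) < inner ℝ (gramSchmidt ℝ b (K + 1)) (gramSchmidt ℝ b (K + 1)) :=
    hpos _ (hne (K + 1) hK)
  have hOrth : (inner ℝ (gramSchmidt ℝ b (K + 1)) (gramSchmidt ℝ b K) : ℝ) = 0 :=
    gramSchmidt_orthogonal ℝ b (by omega)
  have hOrth' : (inner ℝ (gramSchmidt ℝ b K) (gramSchmidt ℝ b (K + 1)) : ℝ) = 0 :=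
    gramSchmidt_orthogonal ℝ b (by omega)
  -- the new Gram-Schmidt vector at position K
  have hu : gramSchmidt ℝ b' K = gramSchmidt ℝ b (K + 1) + μ • gramSchmidt ℝ b K := by
    refine gs_unique ?_ ?_
    · rw [hbK, hspan_lt K le_rfl]
      have hdef := gramSchmidt_def'' ℝ b (K + 1)
      rw [Nat.Iio_eq_range, Finset.sum_range_succ] at hdef
      simp only [RCLike.ofReal_real_eq_id, id_eq] at hdef
      have hμ' : ((inner ℝ (gramSchmidt ℝ b K) (b (K + 1)) : ℝ) / (‖gramSchmidt ℝ b K‖ : ℝ) ^ 2)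
          = μ := by
        rw [hμ, real_inner_comm, real_inner_self_eq_norm_sq]
      have hrw : gramSchmidt ℝ b (K + 1) + μ • gramSchmidt ℝ b K - b (K + 1)
          = -∑ i ∈ Finset.range K,
              ((inner ℝ (gramSchmidt ℝ b i) (b (K + 1)) : ℝ) / (‖gramSchmidt ℝ b i‖ : ℝ) ^ 2) •
                gramSchmidt ℝ b i := by
        conv_lhs => rw [hdef]
        rw [hμ']
        abel
      rw [hrw]
      refine neg_mem (Submodule.sum_mem _ fun i hi => smul_mem _ _ ?_)
      refine span_mono (Set.image_mono ?_) (gramSchmidt_mem_span ℝ b le_rfl)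
      intro x hx
      exact lt_of_le_of_lt hx (Finset.mem_range.mp hi)
    · rw [hspan_lt K le_rfl, ← span_gramSchmidt_Iio ℝ b K]
      refine inner_span_zero' ?_
      rintro _ ⟨i, hi, rfl⟩
      have hiK : i < K := hi
      rw [inner_add_left, real_inner_smul_left,
        gramSchmidt_orthogonal ℝ b (show K + 1 ≠ i by omega),
        gramSchmidt_orthogonal ℝ b (show K ≠ i by omega)]
      ring
  have hU : (inner ℝ (gramSchmidt ℝ b' K) (gramSchmidt ℝ b' K) : ℝ)
      = inner ℝ (gramSchmidt ℝ b (K + 1)) (gramSchmidt ℝ b (K + 1))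
        + μ ^ 2 * inner ℝ (gramSchmidt ℝ b K) (gramSchmidt ℝ b K) := by
    rw [hu]
    simp only [inner_add_left, inner_add_right, real_inner_smul_left, real_inner_smul_right,
      hOrth, hOrth']
    ring
  have hUpos : (0 : ℝ) < inner ℝ (gramSchmidt ℝ b' K) (gramSchmidt ℝ b' K) := by
    rw [hU]; nlinarith [sq_nonneg μ, hApos.le, hBpos]
  -- the new Gram-Schmidt vector at position K+1
  set c : ℝ := μ * inner ℝ (gramSchmidt ℝ b K) (gramSchmidt ℝ b K) /
      (inner ℝ (gramSchmidt ℝ b (K + 1)) (gramSchmidt ℝ b (K + 1))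
        + μ ^ 2 * inner ℝ (gramSchmidt ℝ b K) (gramSchmidt ℝ b K)) with hc
  have hgKu : (inner ℝ (gramSchmidt ℝ b K) (gramSchmidt ℝ b' K) : ℝ)
      = μ * inner ℝ (gramSchmidt ℝ b K) (gramSchmidt ℝ b K) := by
    rw [hu, inner_add_right, real_inner_smul_right, hOrth']
    ring
  have hw : gramSchmidt ℝ b' (K + 1) = gramSchmidt ℝ b K - c • gramSchmidt ℝ b' K := by
    refine gs_unique ?_ ?_
    · rw [hbK1]
      have h1a : gramSchmidt ℝ b K - b K ∈ span ℝ (b' '' Set.Iio (K + 1)) := by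
        have hmem : gramSchmidt ℝ b K - b K ∈ span ℝ (b '' Set.Iio K) := gramSchmidt_sub_mem' b K
        have hsub : span ℝ (b '' Set.Iio K) ≤ span ℝ (b' '' Set.Iio (K + 1)) := by
          rw [← hspan_lt K le_rfl]
          exact span_mono (Set.image_mono (Set.Iio_subset_Iio (by omega)))
        exact hsub hmem
      have h1b : gramSchmidt ℝ b' K ∈ span ℝ (b' '' Set.Iio (K + 1)) := by
        have hmem : gramSchmidt ℝ b' K ∈ span ℝ (b' '' Set.Iic K) :=
          gramSchmidt_mem_span ℝ b' le_rfl
        rwa [show Set.Iic K = Set.Iio (K + 1) by ext x; simp [Nat.lt_succ_iff]] at hmem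
      have hmem := sub_mem h1a (smul_mem _ c h1b)
      convert hmem using 1
      abel
    · rw [← span_gramSchmidt_Iio ℝ b' (K + 1)]
      refine inner_span_zero' ?_
      rintro _ ⟨i, hi, rfl⟩
      have hiK1 : i < K + 1 := hi
      rcases Nat.lt_succ_iff_lt_or_eq.mp hiK1 with hiK | rfl
      · rw [h_lt i hiK, inner_sub_left, real_inner_smul_left,
          gramSchmidt_orthogonal ℝ b (show K ≠ i by omega)]
        have h2 : (inner ℝ (gramSchmidt ℝ b' K) (gramSchmidt ℝ b i) : ℝ) = 0 := by
          rw [hu, inner_add_left, real_inner_smul_left,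
            gramSchmidt_orthogonal ℝ b (show K + 1 ≠ i by omega),
            gramSchmidt_orthogonal ℝ b (show K ≠ i by omega)]
          ring
        rw [h2]
        ring
      · have hgKu' : (inner ℝ (gramSchmidt ℝ b' i) (gramSchmidt ℝ b i) : ℝ)
            = μ * inner ℝ (gramSchmidt ℝ b i) (gramSchmidt ℝ b i) := by
          rw [real_inner_comm]; exact hgKu
        rw [inner_sub_left, real_inner_smul_left]
        simp only [hgKu, hgKu', hc, hU]
        field_simp
        ring
  have hW : (inner ℝ (gramSchmidt ℝ b' (K + 1)) (gramSchmidt ℝ b' (K + 1)) : ℝ)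
      = inner ℝ (gramSchmidt ℝ b K) (gramSchmidt ℝ b K)
        - 2 * c * (μ * inner ℝ (gramSchmidt ℝ b K) (gramSchmidt ℝ b K))
        + c ^ 2 * (inner ℝ (gramSchmidt ℝ b (K + 1)) (gramSchmidt ℝ b (K + 1))
            + μ ^ 2 * inner ℝ (gramSchmidt ℝ b K) (gramSchmidt ℝ b K)) := by
    have hgKu' : (inner ℝ (gramSchmidt ℝ b' K) (gramSchmidt ℝ b K) : ℝ)
        = μ * inner ℝ (gramSchmidt ℝ b K) (gramSchmidt ℝ b K) := by
      rw [real_inner_comm]; exact hgKu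
    rw [hw]
    simp only [inner_sub_left, inner_sub_right, real_inner_smul_left, real_inner_smul_right,
      hgKu, hgKu', hU]
    ring
  have hdenne : (inner ℝ (gramSchmidt ℝ b (K + 1)) (gramSchmidt ℝ b (K + 1)) : ℝ)
      + μ ^ 2 * inner ℝ (gramSchmidt ℝ b K) (gramSchmidt ℝ b K) ≠ 0 := by
    nlinarith [sq_nonneg μ, hApos.le, hBpos]
  have hprodUW : (inner ℝ (gramSchmidt ℝ b' K) (gramSchmidt ℝ b' K) : ℝ)
        * inner ℝ (gramSchmidt ℝ b' (K + 1)) (gramSchmidt ℝ b' (K + 1))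
      = (inner ℝ (gramSchmidt ℝ b K) (gramSchmidt ℝ b K) : ℝ)
        * inner ℝ (gramSchmidt ℝ b (K + 1)) (gramSchmidt ℝ b (K + 1)) := by
    rw [hU, hW, hc]
    field_simp
    ring
  -- product comparisons
  have hre : ∀ n, n ≤ K →
      (∏ s ∈ Finset.range n, (inner ℝ (gramSchmidt ℝ b' s) (gramSchmidt ℝ b' s) : ℝ))
        = ∏ s ∈ Finset.range n, (inner ℝ (gramSchmidt ℝ b s) (gramSchmidt ℝ b s) : ℝ) := by
    intro n hn
    refine Finset.prod_congr rfl fun s hs => ?_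
    rw [h_lt s (by have := Finset.mem_range.mp hs; omega)]
  have hdKpos : (0 : ℝ) <
      ∏ s ∈ Finset.range K, (inner ℝ (gramSchmidt ℝ b s) (gramSchmidt ℝ b s) : ℝ) :=
    Finset.prod_pos fun s hs =>
      hpos _ (hne s (by have := Finset.mem_range.mp hs; omega))
  have hUlt : (inner ℝ (gramSchmidt ℝ b' K) (gramSchmidt ℝ b' K) : ℝ)
      < 3 / 4 * inner ℝ (gramSchmidt ℝ b K) (gramSchmidt ℝ b K) := by
    rw [hu, real_inner_self_eq_norm_sq, real_inner_self_eq_norm_sq]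
    exact hlovaszfail
  constructor
  · rw [hd', hd, Finset.prod_range_succ, Finset.prod_range_succ, hre K le_rfl]
    nlinarith [mul_lt_mul_of_pos_left hUlt hdKpos]
  · intro t ht
    rcases lt_or_gt_of_ne ht with h | h
    · rw [hd, hd']
      exact hre t (by omega)
    · rw [hd, hd',
        ← Finset.prod_range_mul_prod_Ico
          (fun s => (inner ℝ (gramSchmidt ℝ b' s) (gramSchmidt ℝ b' s) : ℝ))
          (show K + 2 ≤ t by omega),
        ← Finset.prod_range_mul_prod_Ico
          (fun s => (inner ℝ (gramSchmidt ℝ b s) (gramSchmidt ℝ b s) : ℝ))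
          (show K + 2 ≤ t by omega)]
      congr 1
      · rw [Finset.prod_range_succ, Finset.prod_range_succ, Finset.prod_range_succ,
          Finset.prod_range_succ, hre K le_rfl, mul_assoc, mul_assoc, hprodUW]
      · refine Finset.prod_congr rfl fun s hs => ?_
        rw [h_ge s (by have := Finset.mem_Ico.mp hs; omega)]
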